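/- Let $0<p<u<\infty$. Then the space $m_{u,p}(\mathbb{Z}^d)$ and the spaces $c_0(\mathbb{Z}^d)$ and $c(\mathbb{Z}^d)$ are incomparable: there exists $\lambda\in c_0(\mathbb{Z}^d)$ (hence also in $c(\mathbb{Z}^d)$) with $\lambda\notin m_{u,p}(\mathbb{Z}^d)$, and there exists $\mu\in m_{u,p}(\mathbb{Z}^d)$ with $\mu\notin c(\mathbb{Z}^d)$ (hence also $\mu\notin c_0(\mathbb{Z}^d)$). Thus $m_{u,p}\not\subset c_0$, $m_{u,p}\not\subset c$, $c_0\not\subset m_{u,p}$ and $c\not\subset m_{u,p}$. -/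

import Mathlib

open scoped ENNReal NNReal BigOperators
open Filter

/-- The unit cube `Q_{0,k}` is contained in the dyadic cube `Q_{-j,m}` of side length `2^j`. -/
def inDyadic (d j : ℕ) (m k : Fin d → ℤ) : Prop :=
  ∀ i, 2 ^ j * m i ≤ k i ∧ k i < 2 ^ j * (m i + 1)

/-- The Morrey sequence space quasi-norm `‖λ | m_{u,p}(ℤ^d)‖`, with values in `ℝ≥0∞`. -/
noncomputable def morreyNorm (d : ℕ) (u p : ℝ) (lam : (Fin d → ℤ) → ℂ) : ℝ≥0∞ :=
  ⨆ (j : ℕ) (m : Fin d → ℤ),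
    ((2 : ℝ≥0∞) ^ (j * d)) ^ (1 / u - 1 / p) *
      (∑' k : {k : Fin d → ℤ // inDyadic d j m k}, (‖lam k.1‖₊ : ℝ≥0∞) ^ p) ^ (1 / p)

/-- The `ℓ_r(ℤ^d)` norm. -/
noncomputable def lpNorm (d : ℕ) (r : ℝ) (lam : (Fin d → ℤ) → ℂ) : ℝ≥0∞ :=
  (∑' k : Fin d → ℤ, (‖lam k‖₊ : ℝ≥0∞) ^ r) ^ (1 / r)

/-- The `ℓ_∞(ℤ^d)` norm. -/
noncomputable def lInftyNorm (d : ℕ) (lam : (Fin d → ℤ) → ℂ) : ℝ≥0∞ :=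
  ⨆ k : Fin d → ℤ, (‖lam k‖₊ : ℝ≥0∞)

/-- The weak Lorentz `ℓ_{u,∞}(ℤ^d)` norm, via the distribution function. -/
noncomputable def weakNorm (d : ℕ) (u : ℝ) (lam : (Fin d → ℤ) → ℂ) : ℝ≥0∞ :=
  ⨆ t : ℝ≥0, (t : ℝ≥0∞) *
    (∑' _ : {k : Fin d → ℤ // (t : ℝ) < ‖lam k‖}, (1 : ℝ≥0∞)) ^ (1 / u)

/-- The norm of the level-`j` space `X^{(j)}_{u,p}(ℤ^d)`. -/
noncomputable def XjNorm (d : ℕ) (u p p' : ℝ) (j : ℕ) (lam : (Fin d → ℤ) → ℂ) : ℝ≥0∞ :=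
  ((2 : ℝ≥0∞) ^ (j * d)) ^ (1 / p - 1 / u) *
    ∑' m : Fin d → ℤ,
      (∑' k : {k : Fin d → ℤ // inDyadic d j m k}, (‖lam k.1‖₊ : ℝ≥0∞) ^ p') ^ (1 / p')

/-- The norm of `X_{u,p}(ℤ^d)`: infimum over decompositions `λ = ∑_j λ^{(j)}`. -/
noncomputable def XupNorm (d : ℕ) (u p p' : ℝ) (lam : (Fin d → ℤ) → ℂ) : ℝ≥0∞ :=
  ⨅ (L : ℕ → (Fin d → ℤ) → ℂ) (_ : ∀ k, HasSum (fun j => L j k) (lam k)),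
    ∑' j : ℕ, XjNorm d u p p' j (L j)

/-- Membership in `m_{u,p}(ℤ^d)`. -/
def MemMorrey (d : ℕ) (u p : ℝ) (lam : (Fin d → ℤ) → ℂ) : Prop :=
  morreyNorm d u p lam ≠ ⊤

/-- Membership in `m^{00}_{u,p}(ℤ^d)`, the closure of the finitely supported sequences. -/
def MemMorrey00 (d : ℕ) (u p : ℝ) (lam : (Fin d → ℤ) → ℂ) : Prop :=
  MemMorrey d u p lam ∧
    ∀ ε : ℝ≥0∞, 0 < ε → ∃ mu : (Fin d → ℤ) → ℂ,
      (Function.support mu).Finite ∧ morreyNorm d u p (lam - mu) < ε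

/-- `Q_{-ν,m} ⊆ Q_{-j,0}` for dyadic cubes. -/
def subCube (d j ν : ℕ) (m : Fin d → ℤ) : Prop :=
  ν ≤ j ∧ ∀ i, 0 ≤ m i ∧ 2 ^ ν * (m i + 1) ≤ 2 ^ j

/-- Norm of the finite-dimensional Morrey space `m^{2^{jd}}_{u,p}` on the cube `Q_{-j,0}`. -/
noncomputable def finMorreyNorm (d : ℕ) (u p : ℝ) (j : ℕ) (lam : (Fin d → ℤ) → ℂ) : ℝ≥0∞ :=
  ⨆ (ν : ℕ) (m : Fin d → ℤ) (_ : subCube d j ν m),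
    ((2 : ℝ≥0∞) ^ (ν * d)) ^ (1 / u - 1 / p) *
      (∑' k : {k : Fin d → ℤ // inDyadic d ν m k}, (‖lam k.1‖₊ : ℝ≥0∞) ^ p) ^ (1 / p)

/-- Operator norm of `id_j : m^{2^{jd}}_{u₁,p₁} → m^{2^{jd}}_{u₂,p₂}`. -/
noncomputable def morreyOpNorm (d : ℕ) (u₁ p₁ u₂ p₂ : ℝ) (j : ℕ) : ℝ≥0∞ :=
  ⨆ (lam : (Fin d → ℤ) → ℂ) (_ : finMorreyNorm d u₁ p₁ j lam ≤ 1),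
    finMorreyNorm d u₂ p₂ j lam

/-- embedding of the discrete cube -/
def cubeEmb (d j : ℕ) (m : Fin d → ℤ) :
    (Fin d → Fin (2 ^ j)) ↪ {k : Fin d → ℤ // inDyadic d j m k} where
  toFun v := ⟨fun i => 2 ^ j * m i + (v i : ℤ), by
    intro i
    have h2 : ((v i : ℕ) : ℤ) < (2 : ℤ) ^ j := by exact_mod_cast (v i).2
    refine ⟨le_add_of_nonneg_right (Int.natCast_nonneg _), ?_⟩
    calc 2 ^ j * m i + ((v i : ℕ) : ℤ) < 2 ^ j * m i + 2 ^ j := by linarith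
      _ = 2 ^ j * (m i + 1) := by ring⟩
  inj' := by
    intro v w h
    have h1 := congrArg Subtype.val h
    funext i
    have h2 := congrFun h1 i
    simp only [add_right_inj] at h2
    exact Fin.ext (by exact_mod_cast h2)

lemma tsum_cube_const_le (d j : ℕ) (m : Fin d → ℤ)
    (f : {k : Fin d → ℤ // inDyadic d j m k} → ℝ≥0∞) (v : ℝ≥0∞)
    (hf : ∀ k, f k = v) :
    (2 : ℝ≥0∞) ^ (j * d) * v ≤ ∑' k, f k := by
  classical
  have h1 : ∑ k ∈ Finset.univ.map (cubeEmb d j m), f k ≤ ∑' k, f k :=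
    ENNReal.sum_le_tsum _
  have h2 : ∑ k ∈ Finset.univ.map (cubeEmb d j m), f k = (2 : ℝ≥0∞) ^ (j * d) * v := by
    rw [Finset.sum_congr rfl fun k _ => hf k, Finset.sum_const, Finset.card_map,
      Finset.card_univ, Fintype.card_fun, Fintype.card_fin, Fintype.card_fin,
      ← pow_mul, nsmul_eq_mul]
    push_cast
    ring
  rw [← h2]; exact h1

private lemma part1 (d : ℕ) (hd : 0 < d) (u p : ℝ) (hp : 0 < p) (hpu : p < u) :
    ∃ lam : (Fin d → ℤ) → ℂ,
      Tendsto lam cofinite (nhds 0) ∧ morreyNorm d u p lam = ⊤ := by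
  classical
  have hu : (0 : ℝ) < u := hp.trans hpu
  set i₀ : Fin d := ⟨0, hd⟩ with hi₀
  set a : ℝ := d / (2 * u) with ha
  have hd0 : (0 : ℝ) < d := by exact_mod_cast hd
  have ha0 : 0 < a := div_pos hd0 (by linarith)
  set lam : (Fin d → ℤ) → ℂ := fun k =>
    if (0 < k i₀ ∧ ∀ i, 0 ≤ k i ∧ k i < 2 ^ (Nat.log 2 (k i₀).toNat + 1)) then
      Complex.ofReal ((2 : ℝ) ^ (-(a * (Nat.log 2 (k i₀).toNat : ℝ))))
    else 0 with hlam
  refine ⟨lam, ?_, ?_⟩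
  · -- tends to 0 along cofinite
    rw [Metric.tendsto_nhds]
    intro ε hε
    rw [Filter.eventually_cofinite]
    -- choose J with 2^(-(a*J)) < ε
    have hlt1 : (2 : ℝ) ^ (-a) < 1 :=
      Real.rpow_lt_one_of_one_lt_of_neg one_lt_two (by linarith)
    have hgeo : Tendsto (fun n : ℕ => ((2 : ℝ) ^ (-a)) ^ n) atTop (nhds 0) :=
      tendsto_pow_atTop_nhds_zero_of_lt_one (le_of_lt (Real.rpow_pos_of_pos two_pos _)) hlt1
    obtain ⟨J, hJ⟩ := (hgeo.eventually (gt_mem_nhds hε)).exists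
    have hJ' : (2 : ℝ) ^ (-(a * (J : ℝ))) < ε := by
      have : ((2 : ℝ) ^ (-a)) ^ J = (2 : ℝ) ^ (-(a * (J : ℝ))) := by
        rw [← Real.rpow_natCast ((2:ℝ) ^ (-a)) J, ← Real.rpow_mul (by norm_num)]
        congr 1; ring
      rwa [this] at hJ
    have hsub : {k : Fin d → ℤ | ¬ dist (lam k) 0 < ε} ⊆
        Set.pi Set.univ (fun _ : Fin d => Set.Icc (0 : ℤ) (2 ^ (J + 1))) := by
      intro k hk
      simp only [Set.mem_setOf_eq] at hk
      by_cases hc : (0 < k i₀ ∧ ∀ i, 0 ≤ k i ∧ k i < 2 ^ (Nat.log 2 (k i₀).toNat + 1))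
      · set n : ℕ := Nat.log 2 (k i₀).toNat with hn
        have hval : lam k = Complex.ofReal ((2 : ℝ) ^ (-(a * (n : ℝ)))) := by
          rw [hlam]; simp only [← hn, if_pos hc]
        have hnorm : dist (lam k) 0 = (2 : ℝ) ^ (-(a * (n : ℝ))) := by
          rw [hval, dist_zero_right, Complex.norm_real, Real.norm_eq_abs,
            abs_of_pos (Real.rpow_pos_of_pos two_pos _)]
        have hnJ : n ≤ J := by
          by_contra hnJ
          push_neg at hnJ
          apply hk
          rw [hnorm]
          calc (2 : ℝ) ^ (-(a * (n : ℝ))) ≤ (2 : ℝ) ^ (-(a * (J : ℝ))) := by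
                apply Real.rpow_le_rpow_of_exponent_le one_le_two
                have : (J : ℝ) ≤ (n : ℝ) := by exact_mod_cast hnJ.le
                nlinarith
            _ < ε := hJ'
        intro i _
        refine ⟨(hc.2 i).1, ?_⟩
        have h1 : k i < 2 ^ (n + 1) := (hc.2 i).2
        have h2 : (2 : ℤ) ^ (n + 1) ≤ 2 ^ (J + 1) := pow_le_pow_right₀ one_le_two (by omega)
        omega
      · exfalso
        apply hk
        rw [hlam]
        simp only [if_neg hc, dist_self]
        exact hε
    exact (Set.Finite.pi fun _ => Set.finite_Icc _ _).subset hsub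
  · -- norm is infinite
    have hup : u ≠ 0 := ne_of_gt hu
    have hpp : p ≠ 0 := ne_of_gt hp
    have hmain : ∀ j : ℕ, (2 : ℝ≥0∞) ^ ((j : ℝ) * a) ≤ morreyNorm d u p lam := by
      intro j
      set mj : Fin d → ℤ := fun i => if i = i₀ then 1 else 0 with hmj
      -- value on the cube
      have hval : ∀ k : {k : Fin d → ℤ // inDyadic d j mj k},
          (‖lam k.1‖₊ : ℝ≥0∞) ^ p = (2 : ℝ≥0∞) ^ (-(a * (j : ℝ)) * p) := by
        rintro ⟨k, hk⟩
        have hk0 : (2 : ℤ) ^ j ≤ k i₀ ∧ k i₀ < 2 ^ j * 2 := by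
          have := hk i₀
          simp only [hmj, if_pos rfl] at this
          constructor
          · linarith [this.1]
          · linarith [this.2]
        have hpos : 0 < k i₀ := lt_of_lt_of_le (by positivity) hk0.1
        have hlog : Nat.log 2 (k i₀).toNat = j := by
          apply Nat.log_eq_of_pow_le_of_lt_pow
          · have : ((2 : ℕ) ^ j : ℤ) ≤ k i₀ := by exact_mod_cast hk0.1
            omega
          · have h2 : k i₀ < ((2 : ℕ) ^ (j + 1) : ℤ) := by
              push_cast
              calc k i₀ < 2 ^ j * 2 := hk0.2
                _ = 2 ^ (j + 1) := by ring
            omega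
        have hcond : (0 < k i₀ ∧ ∀ i, 0 ≤ k i ∧ k i < 2 ^ (j + 1)) := by
          refine ⟨hpos, fun i => ?_⟩
          by_cases hi : i = i₀
          · rw [hi]
            refine ⟨hpos.le, ?_⟩
            calc k i₀ < 2 ^ j * 2 := hk0.2
              _ = 2 ^ (j + 1) := by ring
          · have := hk i
            simp only [hmj, if_neg hi] at this
            refine ⟨by linarith [this.1], ?_⟩
            have : k i < 2 ^ j := by linarith [this.2]
            calc k i < 2 ^ j := this
              _ ≤ 2 ^ (j + 1) := by
                apply pow_le_pow_right₀ one_le_two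
                omega
        have hlamk : lam k = Complex.ofReal ((2 : ℝ) ^ (-(a * (j : ℝ)))) := by
          rw [hlam]
          simp only [hlog]
          rw [if_pos hcond]
        rw [hlamk, Complex.nnnorm_real,
          ← enorm_eq_nnnorm, Real.enorm_eq_ofReal (le_of_lt (Real.rpow_pos_of_pos two_pos _)),
          ← ENNReal.ofReal_rpow_of_pos two_pos, ENNReal.ofReal_ofNat,
          ← ENNReal.rpow_mul]
      -- lower bound for the inner tsum
      have hsum : (2 : ℝ≥0∞) ^ (j * d) * (2 : ℝ≥0∞) ^ (-(a * (j : ℝ)) * p) ≤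
          ∑' k : {k : Fin d → ℤ // inDyadic d j mj k}, (‖lam k.1‖₊ : ℝ≥0∞) ^ p :=
        tsum_cube_const_le d j mj _ _ hval
      have hA : ((2 : ℝ≥0∞) ^ (j * d)) ^ (1 / u - 1 / p) *
          ((2 : ℝ≥0∞) ^ (j * d) * (2 : ℝ≥0∞) ^ (-(a * (j : ℝ)) * p)) ^ (1 / p) =
          (2 : ℝ≥0∞) ^ ((j : ℝ) * a) := by
        rw [← ENNReal.rpow_natCast 2 (j * d),
          ← ENNReal.rpow_add _ _ (by norm_num) (by norm_num),
          ← ENNReal.rpow_mul, ← ENNReal.rpow_mul,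
          ← ENNReal.rpow_add _ _ (by norm_num) (by norm_num)]
        congr 1
        push_cast
        rw [ha]
        field_simp
        ring
      calc (2 : ℝ≥0∞) ^ ((j : ℝ) * a)
          = ((2 : ℝ≥0∞) ^ (j * d)) ^ (1 / u - 1 / p) *
            ((2 : ℝ≥0∞) ^ (j * d) * (2 : ℝ≥0∞) ^ (-(a * (j : ℝ)) * p)) ^ (1 / p) := hA.symm
        _ ≤ ((2 : ℝ≥0∞) ^ (j * d)) ^ (1 / u - 1 / p) *
            (∑' k : {k : Fin d → ℤ // inDyadic d j mj k}, (‖lam k.1‖₊ : ℝ≥0∞) ^ p) ^ (1 / p) :=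
            mul_le_mul_right (ENNReal.rpow_le_rpow hsum (by positivity)) _
        _ ≤ morreyNorm d u p lam := by
            rw [morreyNorm]
            exact le_iSup_of_le j (le_iSup_of_le mj le_rfl)
    have htop : (⨆ j : ℕ, (2 : ℝ≥0∞) ^ ((j : ℝ) * a)) = ⊤ := by
      rw [iSup_eq_top]
      intro b hb
      lift b to ℝ≥0 using hb.ne
      have hρ : (1 : ℝ≥0) < (2 : ℝ≥0) ^ a := by
        have := NNReal.rpow_lt_rpow_of_exponent_lt (x := 2) one_lt_two (by linarith : (0:ℝ) < a)
        simpa using this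
      obtain ⟨n, hn⟩ := pow_unbounded_of_one_lt (b : ℝ≥0) hρ
      refine ⟨n, ?_⟩
      have hcoe : (2 : ℝ≥0∞) ^ ((n : ℝ) * a) = ((((2 : ℝ≥0) ^ a) ^ n : ℝ≥0) : ℝ≥0∞) := by
        rw [mul_comm, ENNReal.rpow_mul, ENNReal.rpow_natCast]
        rw [ENNReal.coe_pow, ENNReal.coe_rpow_of_ne_zero (by norm_num)]
        norm_num
      rw [hcoe]
      exact_mod_cast hn
    rw [eq_top_iff, ← htop]
    exact iSup_le hmain

private lemma pow_gap (j n n' : ℕ) (m0 : ℤ) (hn : (2 : ℤ) ^ j * m0 ≤ 2 ^ n)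
    (hn' : (2 : ℤ) ^ n' < 2 ^ j * (m0 + 1)) (h1 : n < n') (h2 : j < n') : False := by
  have e1 : (2 : ℤ) ^ n ≤ 2 ^ (n' - 1) := pow_le_pow_right₀ one_le_two (by omega)
  have e2 : (2 : ℤ) ^ j ≤ 2 ^ (n' - 1) := pow_le_pow_right₀ one_le_two (by omega)
  have e3 : (2 : ℤ) ^ (n' - 1) + 2 ^ (n' - 1) = 2 ^ n' := by
    rw [← two_mul, ← pow_succ']
    congr 1
    omega
  have e4 : (2 : ℤ) ^ j * (m0 + 1) = 2 ^ j * m0 + 2 ^ j := by ring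
  linarith

private lemma part2 (d : ℕ) (hd : 0 < d) (u p : ℝ) (hp : 0 < p) (hpu : p < u) :
    ∃ mu : (Fin d → ℤ) → ℂ,
      morreyNorm d u p mu ≠ ⊤ ∧ ¬ ∃ c : ℂ, Tendsto mu cofinite (nhds c) := by
  classical
  have hu : (0 : ℝ) < u := hp.trans hpu
  have hd0 : (0 : ℝ) < d := by exact_mod_cast hd
  set i₀ : Fin d := ⟨0, hd⟩ with hi₀
  set mu : (Fin d → ℤ) → ℂ := fun k =>
    if (∃ n : ℕ, k i₀ = 2 ^ n) ∧ (∀ i, i ≠ i₀ → k i = 0) then 1 else 0 with hmu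
  set t : ℝ := d * (1 / p - 1 / u) with ht
  have ht0 : 0 < t := by
    apply mul_pos hd0
    rw [sub_pos]
    exact one_div_lt_one_div_of_lt hp hpu
  set r : ℝ := (2 : ℝ) ^ (t * p) with hr
  have hr1 : 1 < r := by
    rw [hr]
    rw [Real.one_lt_rpow_iff_of_pos two_pos]
    exact Or.inl ⟨one_lt_two, mul_pos ht0 hp⟩
  set c : ℝ := min 1 (r - 1) with hc
  have hc0 : 0 < c := lt_min one_pos (by linarith)
  set CR : ℝ := (2 / c) ^ (1 / p) with hCR
  have hCR0 : 0 < CR := Real.rpow_pos_of_pos (by positivity) _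
  -- real inequality
  have hreal : ∀ j : ℕ, ((j : ℝ) + 2) ^ (1 / p) ≤ CR * (2 : ℝ) ^ (t * (j : ℝ)) := by
    intro j
    have hb : 1 + (j : ℝ) * (r - 1) ≤ r ^ j := by
      have := one_add_mul_le_pow (a := r - 1) (by linarith) j
      have h0 : 1 + (r - 1) = r := by ring
      rwa [h0] at this
    have hj0 : (0 : ℝ) ≤ (j : ℝ) := Nat.cast_nonneg j
    have h1 : (j : ℝ) + 2 ≤ (2 / c) * r ^ j := by
      have h2 : c ≤ 1 := min_le_left _ _
      have h3 : c ≤ r - 1 := min_le_right _ _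
      rw [div_mul_eq_mul_div, le_div_iff₀ hc0]
      nlinarith
    have h4 : (((j : ℝ) + 2)) ^ (1 / p) ≤ ((2 / c) * r ^ j) ^ (1 / p) :=
      Real.rpow_le_rpow (by positivity) h1 (by positivity)
    rw [Real.mul_rpow (by positivity) (pow_nonneg (by linarith : (0:ℝ) ≤ r) j)] at h4
    have h5 : ((r : ℝ) ^ j) ^ (1 / p) = (2 : ℝ) ^ (t * (j : ℝ)) := by
      have he : t * p * ((j:ℝ) * (1/p)) = t * (j:ℝ) := by
        rw [show t * p * ((j:ℝ) * (1/p)) = t * (j:ℝ) * (p / p) by ring,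
          div_self (ne_of_gt hp), mul_one]
      rw [hr, ← Real.rpow_natCast ((2:ℝ) ^ (t * p)) j,
        ← Real.rpow_mul (Real.rpow_nonneg (by norm_num) _),
        ← Real.rpow_mul (by norm_num : (0:ℝ) ≤ 2), he]
    rw [h5] at h4
    exact h4
  refine ⟨mu, ?_, ?_⟩
  · -- finite Morrey norm
    have hbound : ∀ (j : ℕ) (m : Fin d → ℤ),
        ((2 : ℝ≥0∞) ^ (j * d)) ^ (1 / u - 1 / p) *
          (∑' k : {k : Fin d → ℤ // inDyadic d j m k}, (‖mu k.1‖₊ : ℝ≥0∞) ^ p) ^ (1 / p)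
          ≤ ENNReal.ofReal CR := by
      intro j m
      set P := {k : Fin d → ℤ // inDyadic d j m k}
      set A : Set P := {k : P | (∃ n : ℕ, k.1 i₀ = 2 ^ n) ∧ (∀ i, i ≠ i₀ → k.1 i = 0)} with hA
      -- identification of summand with indicator
      have hf : (fun k : P => (‖mu k.1‖₊ : ℝ≥0∞) ^ p) = A.indicator (fun _ => 1) := by
        funext k
        by_cases hk : (∃ n : ℕ, k.1 i₀ = 2 ^ n) ∧ (∀ i, i ≠ i₀ → k.1 i = 0)
        · have h1 : mu k.1 = 1 := by rw [hmu]; exact if_pos hk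
          rw [h1, Set.indicator_of_mem (show k ∈ A from hk)]
          simp
        · have h1 : mu k.1 = 0 := by rw [hmu]; exact if_neg hk
          rw [h1, Set.indicator_of_notMem (show k ∉ A from hk)]
          simp [ENNReal.zero_rpow_of_pos hp]
      -- injection of A into Option (Fin (j+1))
      have hlog : ∀ a : A, a.1.1 i₀ = 2 ^ (Nat.log 2 (a.1.1 i₀).toNat) := by
        intro a
        obtain ⟨n, hn⟩ := a.2.1
        rw [hn]
        have h1 : ((2 : ℤ) ^ n).toNat = 2 ^ n := by
          rw [show (2:ℤ)^n = ((2^n : ℕ) : ℤ) by push_cast; ring, Int.toNat_natCast]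
        rw [h1, Nat.log_pow one_lt_two]
      have hext : ∀ a b : A, a.1.1 i₀ = b.1.1 i₀ → a = b := by
        intro a b h
        refine Subtype.ext (Subtype.ext (funext fun i => ?_))
        by_cases hi : i = i₀
        · rw [hi]; exact h
        · rw [a.2.2 i hi, b.2.2 i hi]
      set ψ : A → Option (Fin (j + 1)) := fun a =>
        if h : Nat.log 2 (a.1.1 i₀).toNat ≤ j then
          some ⟨Nat.log 2 (a.1.1 i₀).toNat, Nat.lt_succ_of_le h⟩
        else none with hψ
      have hψinj : Function.Injective ψ := by
        intro a b hab
        rw [hψ] at hab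
        simp only at hab
        by_cases haj : Nat.log 2 (a.1.1 i₀).toNat ≤ j <;>
          by_cases hbj : Nat.log 2 (b.1.1 i₀).toNat ≤ j
        · rw [dif_pos haj, dif_pos hbj] at hab
          have h : Nat.log 2 (a.1.1 i₀).toNat = Nat.log 2 (b.1.1 i₀).toNat :=
            congrArg Fin.val (Option.some.inj hab)
          apply hext
          rw [hlog a, hlog b, h]
        · rw [dif_pos haj, dif_neg hbj] at hab; exact absurd hab (by simp)
        · rw [dif_neg haj, dif_pos hbj] at hab; exact absurd hab (by simp)
        · -- both logs > j : impossible unless equal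
          push_neg at haj hbj
          rcases Nat.lt_trichotomy (Nat.log 2 (a.1.1 i₀).toNat)
            (Nat.log 2 (b.1.1 i₀).toNat) with h | h | h
          · exfalso
            refine pow_gap j _ _ (m i₀) ?_ ?_ h hbj
            · rw [← hlog a]; exact (a.1.2 i₀).1
            · rw [← hlog b]; exact (b.1.2 i₀).2
          · apply hext
            rw [hlog a, hlog b, h]
          · exfalso
            refine pow_gap j _ _ (m i₀) ?_ ?_ h haj
            · rw [← hlog b]; exact (b.1.2 i₀).1
            · rw [← hlog a]; exact (a.1.2 i₀).2
      -- sum bound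
      have hS : (∑' k : P, (‖mu k.1‖₊ : ℝ≥0∞) ^ p) ≤ ((j : ℝ≥0∞) + 2) := by
        rw [hf, ← tsum_subtype]
        calc (∑' _ : A, (1 : ℝ≥0∞)) = ∑' a : A, (fun _ : Option (Fin (j+1)) => (1:ℝ≥0∞)) (ψ a) := rfl
          _ ≤ ∑' _ : Option (Fin (j + 1)), (1 : ℝ≥0∞) :=
              ENNReal.tsum_comp_le_tsum_of_injective hψinj _
          _ = ((j : ℝ≥0∞) + 2) := by
              rw [tsum_fintype]
              simp [Finset.card_univ]
              ring
      -- assemble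
      have hAj : ((2 : ℝ≥0∞) ^ (j * d)) ^ (1 / u - 1 / p) = (2 : ℝ≥0∞) ^ (-(t * (j : ℝ))) := by
        rw [← ENNReal.rpow_natCast 2 (j * d), ← ENNReal.rpow_mul]
        congr 1
        push_cast
        rw [ht]
        ring
      have hSp : (∑' k : P, (‖mu k.1‖₊ : ℝ≥0∞) ^ p) ^ (1 / p) ≤
          ENNReal.ofReal (((j : ℝ) + 2) ^ (1 / p)) := by
        have h1 : ((j : ℝ≥0∞) + 2) = ENNReal.ofReal ((j : ℝ) + 2) := by
          rw [ENNReal.ofReal_add (Nat.cast_nonneg j) (by norm_num)]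
          simp [ENNReal.ofReal_natCast]
        calc (∑' k : P, (‖mu k.1‖₊ : ℝ≥0∞) ^ p) ^ (1 / p)
            ≤ ((j : ℝ≥0∞) + 2) ^ (1 / p) := ENNReal.rpow_le_rpow hS (by positivity)
          _ = ENNReal.ofReal (((j : ℝ) + 2) ^ (1 / p)) := by
              rw [h1, ENNReal.ofReal_rpow_of_pos (by positivity)]
      calc ((2 : ℝ≥0∞) ^ (j * d)) ^ (1 / u - 1 / p) *
            (∑' k : P, (‖mu k.1‖₊ : ℝ≥0∞) ^ p) ^ (1 / p)
          ≤ (2 : ℝ≥0∞) ^ (-(t * (j : ℝ))) * ENNReal.ofReal (((j : ℝ) + 2) ^ (1 / p)) := by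
            rw [hAj]; exact mul_le_mul_right hSp _
        _ ≤ (2 : ℝ≥0∞) ^ (-(t * (j : ℝ))) * ENNReal.ofReal (CR * (2 : ℝ) ^ (t * (j : ℝ))) :=
            mul_le_mul_right (ENNReal.ofReal_le_ofReal (hreal j)) _
        _ = ENNReal.ofReal CR := by
            rw [ENNReal.ofReal_mul hCR0.le, ← ENNReal.ofReal_rpow_of_pos two_pos,
              ENNReal.ofReal_ofNat, ← mul_assoc, mul_comm ((2:ℝ≥0∞) ^ (-(t * (j:ℝ)))),
              mul_assoc, ← ENNReal.rpow_add _ _ (by norm_num) (by norm_num)]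
            simp
    have : morreyNorm d u p mu ≤ ENNReal.ofReal CR := by
      rw [morreyNorm]
      exact iSup_le fun j => iSup_le fun m => hbound j m
    exact ne_top_of_le_ne_top ENNReal.ofReal_ne_top this
  · -- not convergent
    rintro ⟨cl, hcl⟩
    rw [Metric.tendsto_nhds] at hcl
    have hF := Filter.eventually_cofinite.1 (hcl (1/2) (by norm_num))
    set pt : ℕ → (Fin d → ℤ) := fun n => fun i => if i = i₀ then (2 : ℤ) ^ n else 0 with hpt
    set qt : ℕ → (Fin d → ℤ) := fun n => fun i => if i = i₀ then -(n : ℤ) - 1 else 0 with hqt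
    have hptinj : Function.Injective pt := by
      intro n m h
      have := congrFun h i₀
      simp only [hpt, if_pos rfl] at this
      exact Nat.pow_right_injective (le_refl 2) (by exact_mod_cast this)
    have hqtinj : Function.Injective qt := by
      intro n m h
      have := congrFun h i₀
      simp only [hqt, if_pos rfl] at this
      omega
    have hmupt : ∀ n, mu (pt n) = 1 := by
      intro n
      rw [hmu]
      apply if_pos
      constructor
      · exact ⟨n, by simp [hpt]⟩
      · intro i hi; simp [hpt, if_neg hi]
    have hmuqt : ∀ n, mu (qt n) = 0 := by
      intro n
      rw [hmu]
      apply if_neg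
      rintro ⟨⟨m', hm'⟩, -⟩
      simp only [hqt, if_pos rfl] at hm'
      have : (0 : ℤ) < 2 ^ m' := by positivity
      omega
    obtain ⟨n₁, hn₁⟩ : ∃ n, pt n ∉ {k | ¬ dist (mu k) cl < 1/2} := by
      have hfin : {n : ℕ | pt n ∈ {k | ¬ dist (mu k) cl < 1/2}}.Finite :=
        Set.Finite.preimage (Set.injOn_of_injective hptinj) hF
      obtain ⟨n, hn⟩ := hfin.infinite_compl.nonempty
      exact ⟨n, hn⟩
    obtain ⟨n₂, hn₂⟩ : ∃ n, qt n ∉ {k | ¬ dist (mu k) cl < 1/2} := by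
      have hfin : {n : ℕ | qt n ∈ {k | ¬ dist (mu k) cl < 1/2}}.Finite :=
        Set.Finite.preimage (Set.injOn_of_injective hqtinj) hF
      obtain ⟨n, hn⟩ := hfin.infinite_compl.nonempty
      exact ⟨n, hn⟩
    simp only [Set.mem_setOf_eq, not_not] at hn₁ hn₂
    rw [hmupt n₁] at hn₁
    rw [hmuqt n₂] at hn₂
    have h10 : dist (1 : ℂ) 0 = 1 := by simp
    have := dist_triangle (1 : ℂ) cl 0
    rw [h10] at this
    have := dist_comm (0 : ℂ) cl
    linarith [dist_triangle (1 : ℂ) cl 0, dist_comm (0 : ℂ) cl ▸ hn₂]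

theorem morrey_incomparable_c0_c (d : ℕ) (hd : 0 < d) (u p : ℝ) (hp : 0 < p) (hpu : p < u) :
    (∃ lam : (Fin d → ℤ) → ℂ,
        Tendsto lam cofinite (nhds 0) ∧ morreyNorm d u p lam = ⊤) ∧
    (∃ mu : (Fin d → ℤ) → ℂ,
        morreyNorm d u p mu ≠ ⊤ ∧ ¬ ∃ c : ℂ, Tendsto mu cofinite (nhds c)) := by
  exact ⟨part1 d hd u p hp hpu, part2 d hd u p hp hpu⟩
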